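/- arXiv:2504.16909 — 2 statements merged into one kernel-verified Lean document; each statement's English description precedes it below -/
import Mathlib

section
/- For ℓ ∈ ℕ, ℓ ≥ 1, and real x, q, define γ_ℓ(x) := Γ(x)Γ(ℓ+2−x)/(Γ(2−x)Γ(x+ℓ)) and ζ_ℓ(q) := (γ_ℓ(2/q) − 1)/(q − 2). Let α ∈ (−1/2, 1), and assume either (α ∈ [0,1) and 2 < q < ∞) or (α ∈ (−1/2, 0) and 2 < q ≤ 4 − 6/α). Then ζ_ℓ(q) ≤ ℓ(ℓ+1−2α)/(2(1−α)) for all integers ℓ ≥ 1. Equality holds for ℓ = 1; the inequality is strict for all ℓ ≥ 3; and for ℓ = 2 equality holds if and only if α ∈ (−1/2, 0) and q = 4 − 6/α. -/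
noncomputable section

/-- `γ_ℓ(x) = Γ(x)Γ(ℓ+2-x)/(Γ(2-x)Γ(x+ℓ))`. -/
def gamCoef (ℓ : ℕ) (x : ℝ) : ℝ :=
  Real.Gamma x * Real.Gamma (ℓ + 2 - x) / (Real.Gamma (2 - x) * Real.Gamma (x + ℓ))

/-- `ζ_ℓ(q) = (γ_ℓ(2/q) - 1)/(q - 2)`. -/
def zetaCoef (ℓ : ℕ) (q : ℝ) : ℝ := (gamCoef ℓ (2 / q) - 1) / (q - 2)

/-- Auxiliary: `g_ℓ(x) = x (γ_ℓ(x) - 1)/(2(1-x))`, so that `ζ_ℓ(q) = g_ℓ(2/q)`. -/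
def gAux (ℓ : ℕ) (x : ℝ) : ℝ := x * (gamCoef ℓ x - 1) / (2 * (1 - x))

lemma zeta_eq_gAux (ℓ : ℕ) {q : ℝ} (hq : 2 < q) :
    zetaCoef ℓ q = gAux ℓ (2 / q) := by
  have hq0 : q ≠ 0 := by linarith
  have hq2 : q - 2 ≠ 0 := by intro h; rw [sub_eq_zero] at h; linarith
  have h1x : 1 - 2 / q ≠ 0 := by
    have : 2 / q < 1 := (div_lt_one (by linarith)).2 hq
    intro h; rw [sub_eq_zero] at h; linarith [this]
  unfold zetaCoef gAux
  field_simp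

lemma gam_rec (ℓ : ℕ) {x : ℝ} (hx : 0 < x) (hx1 : x < 1) :
    gamCoef (ℓ + 1) x = gamCoef ℓ x * (((ℓ : ℝ) + 2 - x) / (x + ℓ)) := by
  have hℓ2x : (0:ℝ) < (ℓ : ℝ) + 2 - x := by
    have : (0:ℝ) ≤ (ℓ : ℝ) := Nat.cast_nonneg ℓ
    linarith
  have hxl : (0:ℝ) < x + (ℓ : ℝ) := by
    have : (0:ℝ) ≤ (ℓ : ℝ) := Nat.cast_nonneg ℓ
    linarith
  have h2x : (0:ℝ) < 2 - x := by linarith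
  unfold gamCoef
  push_cast
  rw [show (ℓ : ℝ) + 1 + 2 - x = ((ℓ : ℝ) + 2 - x) + 1 by ring,
    Real.Gamma_add_one hℓ2x.ne',
    show x + ((ℓ : ℝ) + 1) = (x + (ℓ : ℝ)) + 1 by ring,
    Real.Gamma_add_one hxl.ne']
  have hΓ1 : Real.Gamma (2 - x) ≠ 0 := (Real.Gamma_pos_of_pos h2x).ne'
  have hΓ2 : Real.Gamma (x + (ℓ : ℝ)) ≠ 0 := (Real.Gamma_pos_of_pos hxl).ne'
  field_simp

lemma gAux_rec (ℓ : ℕ) {x : ℝ} (hx : 0 < x) (hx1 : x < 1) :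
    gAux (ℓ + 1) x = (((ℓ : ℝ) + 2 - x) * gAux ℓ x + x) / ((ℓ : ℝ) + x) := by
  have h1 : (1:ℝ) - x ≠ 0 := by intro h; rw [sub_eq_zero] at h; linarith
  have hxl : (0:ℝ) < x + (ℓ : ℝ) := by
    have : (0:ℝ) ≤ (ℓ : ℝ) := Nat.cast_nonneg ℓ
    linarith
  have h2 : (ℓ : ℝ) + x ≠ 0 := by linarith
  have h3 : x + (ℓ : ℝ) ≠ 0 := hxl.ne'
  rw [gAux, gam_rec ℓ hx hx1, gAux]
  field_simp
  ring

lemma gam_one {x : ℝ} (hx : 0 < x) (hx1 : x < 1) :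
    gamCoef 1 x = (2 - x) / x := by
  have h2x : (0:ℝ) < 2 - x := by linarith
  unfold gamCoef
  rw [show ((1 : ℕ) : ℝ) + 2 - x = (2 - x) + 1 by push_cast; ring,
    Real.Gamma_add_one h2x.ne',
    show x + ((1 : ℕ) : ℝ) = x + 1 by push_cast; ring,
    Real.Gamma_add_one hx.ne']
  have hΓ1 : Real.Gamma (2 - x) ≠ 0 := (Real.Gamma_pos_of_pos h2x).ne'
  have hΓ2 : Real.Gamma x ≠ 0 := (Real.Gamma_pos_of_pos hx).ne'
  field_simp

lemma gAux_one {x : ℝ} (hx : 0 < x) (hx1 : x < 1) : gAux 1 x = 1 := by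
  have h1 : (1:ℝ) - x ≠ 0 := by intro h; rw [sub_eq_zero] at h; linarith
  rw [gAux, gam_one hx hx1]
  field_simp
  ring

lemma gAux_two {x : ℝ} (hx : 0 < x) (hx1 : x < 1) : gAux 2 x = 3 / (1 + x) := by
  have := gAux_rec 1 hx hx1
  rw [show (1 : ℕ) + 1 = 2 from rfl] at this
  rw [this, gAux_one hx hx1]
  norm_num

/-- Main induction: for `ℓ ≥ 2`, the inequality holds, strictly for `ℓ ≥ 3`. -/
lemma main_ineq (α : ℝ) (hα' : α < 1) {x : ℝ} (hx : 0 < x) (hx1 : x < 1)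
    (h3 : 0 ≤ (3 - 2 * α) * x + α) :
    ∀ ℓ : ℕ, 2 ≤ ℓ →
      gAux ℓ x ≤ (ℓ : ℝ) * ((ℓ : ℝ) + 1 - 2 * α) / (2 * (1 - α)) ∧
      (3 ≤ ℓ → gAux ℓ x < (ℓ : ℝ) * ((ℓ : ℝ) + 1 - 2 * α) / (2 * (1 - α))) := by
  have hd : (0:ℝ) < 2 * (1 - α) := by linarith
  intro ℓ hℓ
  induction ℓ, hℓ using Nat.le_induction with
  | base =>
    constructor
    · rw [gAux_two hx hx1]
      rw [div_le_div_iff₀ (by linarith) hd]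
      push_cast
      nlinarith [h3]
    · intro h; omega
  | succ ℓ hℓ ih =>
    have hl2 : (2:ℝ) ≤ (ℓ : ℝ) := by exact_mod_cast hℓ
    have hlx : (0:ℝ) < (ℓ : ℝ) + x := by linarith
    have hkey : 0 < ((ℓ : ℝ) + 2 - 2 * α) * x + α := by
      nlinarith [h3, mul_pos (show (0:ℝ) < (ℓ : ℝ) - 1 by linarith) hx]
    have hg : gAux ℓ x * (2 * (1 - α)) ≤ (ℓ : ℝ) * ((ℓ : ℝ) + 1 - 2 * α) :=
      (le_div_iff₀ hd).1 ih.1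
    have hstrict : gAux (ℓ + 1) x <
        ((ℓ : ℝ) + 1) * (((ℓ : ℝ) + 1) + 1 - 2 * α) / (2 * (1 - α)) := by
      rw [gAux_rec ℓ hx hx1, div_lt_div_iff₀ hlx hd]
      nlinarith [mul_pos (show (0:ℝ) < (ℓ : ℝ) by linarith) hkey,
        mul_nonneg (show (0:ℝ) ≤ (ℓ : ℝ) + 2 - x by linarith) (sub_nonneg.2 hg)]
    have hcast : ((ℓ + 1 : ℕ) : ℝ) = (ℓ : ℝ) + 1 := by push_cast; ring
    rw [hcast]
    exact ⟨le_of_lt hstrict, fun _ => hstrict⟩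

/-- the inequality `ζ_ℓ(q) ≤ ℓ(ℓ+1-2α)/(2(1-α))` with its equality cases. -/
theorem statement16 (α q : ℝ) (hα : -(1 / 2) < α) (hα' : α < 1)
    (hq : (0 ≤ α ∧ 2 < q) ∨ (α < 0 ∧ 2 < q ∧ q ≤ 4 - 6 / α)) :
    (∀ ℓ : ℕ, 1 ≤ ℓ →
      zetaCoef ℓ q ≤ (ℓ : ℝ) * ((ℓ : ℝ) + 1 - 2 * α) / (2 * (1 - α))) ∧
    zetaCoef 1 q = 1 * (1 + 1 - 2 * α) / (2 * (1 - α)) ∧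
    (∀ ℓ : ℕ, 3 ≤ ℓ →
      zetaCoef ℓ q < (ℓ : ℝ) * ((ℓ : ℝ) + 1 - 2 * α) / (2 * (1 - α))) ∧
    (zetaCoef 2 q = 2 * (2 + 1 - 2 * α) / (2 * (1 - α)) ↔ (α < 0 ∧ q = 4 - 6 / α)) := by
  have hq2 : 2 < q := by rcases hq with ⟨_, h⟩ | ⟨_, h, _⟩ <;> exact h
  have hq0 : (0:ℝ) < q := by linarith
  set x : ℝ := 2 / q with hxdef
  have hx : 0 < x := by positivity
  have hx1 : x < 1 := (div_lt_one hq0).2 (by linarith)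
  have hd : (0:ℝ) < 2 * (1 - α) := by linarith
  -- the key inequality on x
  have h3 : 0 ≤ (3 - 2 * α) * x + α := by
    rcases hq with ⟨hα0, _⟩ | ⟨hα0, _, hq4⟩
    · have : 0 < (3 - 2 * α) * x := mul_pos (by linarith) hx
      linarith
    · -- α < 0, q ≤ 4 - 6/α ⟹ αq ≥ 4α - 6
      have hαq : α * q ≥ 4 * α - 6 := by
        have h6 : 6 / α * α = 6 := div_mul_cancel₀ 6 (by exact ne_of_lt hα0 : α ≠ 0)
        nlinarith [mul_le_mul_of_nonpos_left hq4 (le_of_lt hα0)]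
      have hxq : x * q = 2 := by
        rw [hxdef]; field_simp
      nlinarith [mul_pos hx hq0]
  -- main bound for ℓ ≥ 2
  have main := main_ineq α hα' hx hx1 h3
  have hzeta1 : zetaCoef 1 q = 1 := by
    rw [zeta_eq_gAux 1 hq2, gAux_one hx hx1]
  refine ⟨?_, ?_, ?_, ?_⟩
  · intro ℓ hℓ
    rcases Nat.lt_or_ge ℓ 2 with h | h
    · have : ℓ = 1 := by omega
      subst this
      rw [hzeta1]
      rw [le_div_iff₀ hd]
      push_cast
      nlinarith
    · rw [zeta_eq_gAux ℓ hq2]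
      exact (main ℓ h).1
  · rw [hzeta1, eq_div_iff hd.ne']
    ring
  · intro ℓ hℓ
    rw [zeta_eq_gAux ℓ hq2]
    exact (main ℓ (by omega)).2 hℓ
  · rw [zeta_eq_gAux 2 hq2, gAux_two hx hx1]
    constructor
    · intro heq
      rw [div_eq_div_iff (by linarith : (0:ℝ) < 1 + x).ne' hd.ne'] at heq
      -- 3 * (2*(1-α)) = 2*(3-2α)*(1+x) ⟹ (3-2α)x + α = 0
      have hzero : (3 - 2 * α) * x + α = 0 := by nlinarith [heq]
      have hαneg : α < 0 := by
        by_contra hc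
        push_neg at hc
        nlinarith [mul_pos (show (0:ℝ) < 3 - 2 * α by linarith) hx]
      refine ⟨hαneg, ?_⟩
      have hα0 : α ≠ 0 := ne_of_lt hαneg
      have hxq : x * q = 2 := by rw [hxdef]; field_simp
      -- multiply hzero by q : 2(3-2α) + αq = 0
      have h5 : (3 - 2 * α) * 2 + α * q = 0 := by nlinarith [hzero, hxq]
      field_simp
      linarith [h5]
    · rintro ⟨hαneg, hqe⟩
      have hα0 : α ≠ 0 := ne_of_lt hαneg
      have hαq : α * q = 4 * α - 6 := by
        rw [hqe]; field_simp
      have hxq : x * q = 2 := by rw [hxdef]; field_simp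
      have hzero : (3 - 2 * α) * x + α = 0 := by nlinarith [hαq, hxq, hq0]
      rw [div_eq_div_iff (by linarith : (0:ℝ) < 1 + x).ne' hd.ne']
      nlinarith [hzero]
end
end

section
/- For ℓ ∈ ℕ, ℓ ≥ 1, and real x, q, define γ_ℓ(x) := Γ(x)Γ(ℓ+2−x)/(Γ(2−x)Γ(x+ℓ)) and ζ_ℓ(q) := (γ_ℓ(2/q) − 1)/(q − 2). Let α ∈ (−1/2, 1), and assume either (α ∈ (−1/2, 0] and 2 < q < ∞) or (α ∈ (0,1) and 2 < q ≤ 2 + 2/α). Then ζ_ℓ(q) ≤ (ℓ+1)(ℓ+2α)/(2(1+2α)) for all integers ℓ ≥ 1. Equality holds for ℓ = 1; the inequality is strict for all ℓ ≥ 3; and for ℓ = 2 equality holds if and only if α ∈ (0,1) and q = 2 + 2/α. -/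
noncomputable section

lemma gamCoef_succ (ℓ : ℕ) {x : ℝ} (hx0 : 0 < x) (hx1 : x < 1) :
    gamCoef (ℓ + 1) x = gamCoef ℓ x * (((ℓ : ℝ) + 2 - x) / ((ℓ : ℝ) + x)) := by
  have hl : (0:ℝ) ≤ (ℓ:ℝ) := Nat.cast_nonneg ℓ
  have h1 : (0:ℝ) < (ℓ:ℝ) + 2 - x := by linarith
  have h2 : (0:ℝ) < x + (ℓ:ℝ) := by linarith
  unfold gamCoef
  have e1 : ((ℓ+1 : ℕ) : ℝ) + 2 - x = ((ℓ:ℝ) + 2 - x) + 1 := by push_cast; ring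
  have e2 : x + ((ℓ+1 : ℕ) : ℝ) = (x + (ℓ:ℝ)) + 1 := by push_cast; ring
  have h3 : Real.Gamma (2 - x) ≠ 0 := (Real.Gamma_pos_of_pos (by linarith)).ne'
  have h4 : Real.Gamma (x + (ℓ:ℝ)) ≠ 0 := (Real.Gamma_pos_of_pos h2).ne'
  have h5 : ((ℓ:ℝ) + x) ≠ 0 := by positivity
  rw [e1, e2, Real.Gamma_add_one h1.ne', Real.Gamma_add_one h2.ne']
  field_simp
  ring

lemma gamCoef_zero {x : ℝ} (hx0 : 0 < x) (hx1 : x < 1) : gamCoef 0 x = 1 := by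
  have h1 : Real.Gamma x ≠ 0 := (Real.Gamma_pos_of_pos hx0).ne'
  have h2 : Real.Gamma (2 - x) ≠ 0 := (Real.Gamma_pos_of_pos (by linarith)).ne'
  unfold gamCoef
  rw [show ((0:ℕ):ℝ) + 2 - x = 2 - x by push_cast; ring,
      show x + ((0:ℕ):ℝ) = x by push_cast; ring]
  field_simp

/-- The `x`-dependent bound `H_ℓ(x) = (ℓ+1)(ℓ-(ℓ-2)x)/(2(1+x))`. -/
def Hb (x : ℝ) (ℓ : ℕ) : ℝ := ((ℓ:ℝ) + 1) * ((ℓ:ℝ) - ((ℓ:ℝ) - 2) * x) / (2 * (1 + x))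

lemma Hb_step (m : ℕ) (hm : 1 ≤ m) {x : ℝ} (hx0 : 0 < x) (hx1 : x < 1) :
    Hb x m * ((m:ℝ) + 2 - x) + x ≤ Hb x (m+1) * ((m:ℝ) + x) ∧
    (2 ≤ m → Hb x m * ((m:ℝ) + 2 - x) + x < Hb x (m+1) * ((m:ℝ) + x)) := by
  have hM : (1:ℝ) ≤ (m:ℝ) := by exact_mod_cast hm
  have h1x : (0:ℝ) < 1 + x := by linarith
  have hΔ : Hb x (m+1) * ((m:ℝ) + x) - (Hb x m * ((m:ℝ) + 2 - x) + x) =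
      x * ((m:ℝ) - 1) * (((m:ℝ) + 2) - x * ((m:ℝ) + 1)) / (1 + x) := by
    unfold Hb; push_cast; field_simp; ring
  have hfac : (0:ℝ) < ((m:ℝ) + 2) - x * ((m:ℝ) + 1) := by nlinarith
  constructor
  · nlinarith [mul_nonneg (mul_nonneg hx0.le (by linarith : (0:ℝ) ≤ (m:ℝ) - 1)) hfac.le,
      div_nonneg (mul_nonneg (mul_nonneg hx0.le (by linarith : (0:ℝ) ≤ (m:ℝ) - 1)) hfac.le) h1x.le]
  · intro hm2
    have hM2 : (2:ℝ) ≤ (m:ℝ) := by exact_mod_cast hm2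
    have : (0:ℝ) < x * ((m:ℝ) - 1) * (((m:ℝ) + 2) - x * ((m:ℝ) + 1)) / (1 + x) := by
      apply div_pos _ h1x
      apply mul_pos (mul_pos hx0 (by linarith)) hfac
    linarith

/-- the inequality `ζ_ℓ(q) ≤ (ℓ+1)(ℓ+2α)/(2(1+2α))` with its equality cases. -/
theorem statement17 (α q : ℝ) (hα : -(1 / 2) < α) (hα' : α < 1)
    (hq : (α ≤ 0 ∧ 2 < q) ∨ (0 < α ∧ 2 < q ∧ q ≤ 2 + 2 / α)) :
    (∀ ℓ : ℕ, 1 ≤ ℓ →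
      zetaCoef ℓ q ≤ ((ℓ : ℝ) + 1) * ((ℓ : ℝ) + 2 * α) / (2 * (1 + 2 * α))) ∧
    zetaCoef 1 q = (1 + 1) * (1 + 2 * α) / (2 * (1 + 2 * α)) ∧
    (∀ ℓ : ℕ, 3 ≤ ℓ →
      zetaCoef ℓ q < ((ℓ : ℝ) + 1) * ((ℓ : ℝ) + 2 * α) / (2 * (1 + 2 * α))) ∧
    (zetaCoef 2 q = (2 + 1) * (2 + 2 * α) / (2 * (1 + 2 * α)) ↔ (0 < α ∧ q = 2 + 2 / α)) := by
  have hq2 : 2 < q := by rcases hq with ⟨_, h⟩ | ⟨_, h, _⟩ <;> exact h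
  have hq0 : 0 < q := by linarith
  set x : ℝ := 2 / q with hxdef
  have hx0 : 0 < x := by positivity
  have hx1 : x < 1 := by rw [hxdef, div_lt_one hq0]; linarith
  have h1x : (0:ℝ) < 1 + x := by linarith
  have hqm2 : (0:ℝ) < q - 2 := by linarith
  have hA : (0:ℝ) < 1 + 2 * α := by linarith
  have h1α : (0:ℝ) < 1 + α := by linarith
  have hxq : x * (q - 2) = 2 - 2 * x := by rw [hxdef]; field_simp
  -- recursion for zetaCoef
  have zrec : ∀ ℓ : ℕ, zetaCoef (ℓ + 1) q =
      (zetaCoef ℓ q * ((ℓ:ℝ) + 2 - x) + x) / ((ℓ:ℝ) + x) := by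
    intro ℓ
    have hl : (0:ℝ) ≤ (ℓ:ℝ) := Nat.cast_nonneg ℓ
    have hlx : (0:ℝ) < (ℓ:ℝ) + x := by linarith
    unfold zetaCoef
    rw [← hxdef, gamCoef_succ ℓ hx0 hx1]
    rw [div_eq_div_iff hqm2.ne' hlx.ne']
    field_simp
    nlinarith [hxq]
  -- value at 1
  have hz1 : zetaCoef 1 q = 1 := by
    have hgam1 : gamCoef 1 x = (2 - x) / x := by
      have h := gamCoef_succ 0 hx0 hx1
      rw [gamCoef_zero hx0 hx1] at h
      simpa using h
    unfold zetaCoef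
    rw [← hxdef, hgam1, div_eq_one_iff_eq hqm2.ne']
    field_simp
    nlinarith [hxq]
  -- value at 2
  have hz2 : zetaCoef 2 q = 3 / (1 + x) := by
    have h := zrec 1
    rw [hz1] at h
    rw [show zetaCoef 2 q = zetaCoef (1 + 1) q from rfl, h]
    push_cast
    rw [div_eq_div_iff (by positivity) h1x.ne']
    ring
  -- zeta ≤ H by induction, strict for ℓ ≥ 3
  have hH1 : Hb x 1 = 1 := by
    unfold Hb; push_cast
    rw [div_eq_one_iff_eq (by positivity)]; ring
  have step : ∀ m : ℕ, 1 ≤ m → zetaCoef m q ≤ Hb x m →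
      zetaCoef (m+1) q ≤ Hb x (m+1) ∧ (2 ≤ m → zetaCoef (m+1) q < Hb x (m+1)) := by
    intro m hm hle
    have hM : (1:ℝ) ≤ (m:ℝ) := by exact_mod_cast hm
    have hmx : (0:ℝ) < (m:ℝ) + x := by linarith
    have hmx2 : (0:ℝ) < (m:ℝ) + 2 - x := by linarith
    have hs := Hb_step m hm hx0 hx1
    have h1 : zetaCoef (m+1) q ≤ (Hb x m * ((m:ℝ) + 2 - x) + x) / ((m:ℝ) + x) := by
      rw [zrec m]
      gcongr
    constructor
    · refine h1.trans ?_
      rw [div_le_iff₀ hmx]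
      exact hs.1
    · intro hm2
      refine h1.trans_lt ?_
      rw [div_lt_iff₀ hmx]
      exact hs.2 hm2
  have bound : ∀ ℓ : ℕ, 1 ≤ ℓ → zetaCoef ℓ q ≤ Hb x ℓ := by
    intro ℓ hℓ
    induction ℓ, hℓ using Nat.le_induction with
    | base => rw [hz1, hH1]
    | succ n hn ih => exact (step n hn ih).1
  have strictbound : ∀ ℓ : ℕ, 3 ≤ ℓ → zetaCoef ℓ q < Hb x ℓ := by
    intro ℓ hℓ
    obtain ⟨m, rfl⟩ : ∃ m, ℓ = m + 1 := ⟨ℓ - 1, by omega⟩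
    have hm2 : 2 ≤ m := by omega
    exact (step m (by omega) (bound m (by omega))).2 hm2
  -- H ≤ B
  have hxα : α ≤ x * (1 + α) := by
    rcases hq with ⟨hα0, _⟩ | ⟨hα0, _, hqle⟩
    · nlinarith [mul_pos hx0 h1α]
    · have h1 : α * q ≤ α * (2 + 2 / α) := mul_le_mul_of_nonneg_left hqle hα0.le
      have h2 : α * (2 + 2 / α) = 2 * α + 2 := by field_simp
      rw [hxdef, div_mul_eq_mul_div, le_div_iff₀ hq0]
      nlinarith
  have HleB : ∀ ℓ : ℕ, 1 ≤ ℓ →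
      Hb x ℓ ≤ ((ℓ:ℝ) + 1) * ((ℓ:ℝ) + 2 * α) / (2 * (1 + 2 * α)) := by
    intro ℓ hℓ
    have hL : (1:ℝ) ≤ (ℓ:ℝ) := by exact_mod_cast hℓ
    unfold Hb
    rw [div_le_div_iff₀ (by positivity) (by positivity)]
    nlinarith [mul_nonneg (mul_nonneg (by linarith : (0:ℝ) ≤ (ℓ:ℝ) + 1)
      (by linarith : (0:ℝ) ≤ (ℓ:ℝ) - 1)) (by linarith : (0:ℝ) ≤ x * (1 + α) - α)]
  refine ⟨fun ℓ hℓ => (bound ℓ hℓ).trans (HleB ℓ hℓ), ?_, fun ℓ hℓ => (strictbound ℓ hℓ).trans_le (HleB ℓ (by omega)), ?_⟩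
  · rw [hz1, eq_comm, div_eq_one_iff_eq (by positivity)]; ring
  · rw [hz2]
    constructor
    · intro h
      have hcross : 3 * (2 * (1 + 2 * α)) = (2 + 1) * (2 + 2 * α) * (1 + x) := by
        rw [div_eq_div_iff h1x.ne' (by positivity : (2 * (1 + 2 * α)) ≠ 0)] at h
        linarith
      have hax : α = x * (1 + α) := by nlinarith [hcross]
      have hα0 : 0 < α := by nlinarith [mul_pos hx0 h1α]
      refine ⟨hα0, ?_⟩
      have hxq2 : x * q = 2 := by rw [hxdef]; field_simp
      have hαq : α * q = 2 * (1 + α) := by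
        linear_combination q * hax + (1 + α) * hxq2
      have hαne : α ≠ 0 := hα0.ne'
      field_simp
      linarith [hαq]
    · rintro ⟨hα0, hqeq⟩
      have hαne : α ≠ 0 := hα0.ne'
      have hqα : q * α = 2 * α + 2 := by rw [hqeq]; field_simp
      have hxq2 : x * q = 2 := by rw [hxdef]; field_simp
      have hax : α = x * (1 + α) := by
        linear_combination (x * hqα - α * hxq2) / 2
      rw [div_eq_div_iff h1x.ne' (by positivity : (2 * (1 + 2 * α)) ≠ 0)]
      linear_combination 6 * hax
end
end
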